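/- In the power allocation game with α_i > 0 for all i, define F_i(p) = λ_i − α_i·W·g_i(p)/(1 + g_i(p)·p_i) for each i ∈ {1,…,M} and p ∈ P, and define the M×M matrix Q by Q_{p,p} = α_p·W and, for p ≠ q, Q_{p,q} = −α_p·W·(a_{p,q}/a_{q,q})·(1 + σ^{−2}·∑_{i=1}^M a_{q,i}·p_i^max). If Q is a P-matrix, then F = (F_1,…,F_M) is a uniformly P-function on P: there exists a constant C > 0 such that for all profiles p, p′ ∈ P, max_{1≤i≤M} (p_i − p′_i)·(F_i(p) − F_i(p′)) ≥ C·∑_{i=1}^M (p_i − p′_i)². -/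

import Mathlib

set_option maxHeartbeats 1000000


open Finset

/-- Equivalent channel gain of player `i` under power profile `p`:
`g_i(p) = a_{i,i} / (∑_{ℓ ≠ i} a_{i,ℓ}·p_ℓ + σ²)`. -/
noncomputable def gain (M : ℕ) (σ2 : ℝ) (a : Fin M → Fin M → ℝ)
    (p : Fin M → ℝ) (i : Fin M) : ℝ :=
  a i i / ((∑ ℓ ∈ Finset.univ.erase i, a i ℓ * p ℓ) + σ2)


/-- The joint strategy set `P = ∏_{i=1}^M [0, p_i^max]`. -/
def stratBox (M : ℕ) (pmax : Fin M → ℝ) : Set (Fin M → ℝ) :=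
  {p | ∀ i, p i ∈ Set.Icc (0 : ℝ) (pmax i)}

/-- `F_i(p) = λ_i − α_i·W·g_i(p)/(1 + g_i(p)·p_i)`. -/
noncomputable def Fmap (M : ℕ) (W σ2 : ℝ) (α lam : Fin M → ℝ)
    (a : Fin M → Fin M → ℝ) (p : Fin M → ℝ) (i : Fin M) : ℝ :=
  lam i - α i * W * gain M σ2 a p i / (1 + gain M σ2 a p i * p i)

/-- The matrix `Q` of Theorem 1: `Q_{p,p} = α_p·W` and, for `p ≠ q`,
`Q_{p,q} = −α_p·W·(a_{p,q}/a_{q,q})·(1 + σ⁻²·∑_i a_{q,i}·p_i^max)`. -/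
noncomputable def Qmat (M : ℕ) (W σ2 : ℝ) (α pmax : Fin M → ℝ)
    (a : Fin M → Fin M → ℝ) : Matrix (Fin M) (Fin M) ℝ :=
  fun p q =>
    if p = q then α p * W
    else -(α p * W * (a p q / a q q) * (1 + σ2⁻¹ * ∑ i, a q i * pmax i))

/-- A real square matrix is a P-matrix if every principal minor is positive. -/
def IsPMatrix {n : ℕ} (A : Matrix (Fin n) (Fin n) ℝ) : Prop :=
  ∀ S : Finset (Fin n), S.Nonempty →
    0 < (A.submatrix (fun i : S => (i : Fin n)) (fun j : S => (j : Fin n))).det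

lemma det_unitOff {n : ℕ} (A : Matrix (Fin n) (Fin n) ℝ) (T : Finset (Fin n)) :
    (show Matrix (Fin n) (Fin n) ℝ from T.piecewise A (fun i => Pi.single i (1:ℝ))).det
      = (A.submatrix (fun i : T => (i : Fin n)) (fun j : T => (j : Fin n))).det := by
  classical
  set M : Matrix (Fin n) (Fin n) ℝ := T.piecewise A (fun i => Pi.single i (1:ℝ)) with hM
  let e : {x // x ∈ T} ⊕ {x // ¬ x ∈ T} ≃ Fin n := Equiv.sumCompl (· ∈ T)
  have h1 : M.submatrix e e
      = Matrix.fromBlocks (A.submatrix (fun i : T => (i : Fin n)) (fun j : T => (j : Fin n)))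
          (A.submatrix (fun i : T => (i : Fin n)) (fun j : {x // ¬ x ∈ T} => (j : Fin n)))
          0 1 := by
    ext i j
    cases i with
    | inl i =>
      have hi : (i : Fin n) ∈ T := i.2
      cases j with
      | inl j => simp [M, Matrix.submatrix, Matrix.of_apply, e, Finset.piecewise, hi]
      | inr j => simp [M, Matrix.submatrix, Matrix.of_apply, e, Finset.piecewise, hi]
    | inr i =>
      have hi : ¬ (i : Fin n) ∈ T := i.2
      cases j with
      | inl j =>
        have : (j : Fin n) ≠ (i : Fin n) := fun h => hi (h ▸ j.2)
        simp [M, Matrix.submatrix, Matrix.of_apply, e, Finset.piecewise, hi,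
          Pi.single_apply, this]
      | inr j =>
        simp [M, Matrix.submatrix, Matrix.of_apply, e, Finset.piecewise, hi,
          Pi.single_apply, Matrix.one_apply, Subtype.ext_iff, eq_comm]
  rw [← Matrix.det_submatrix_equiv_self e, h1, Matrix.det_fromBlocks_zero₂₁,
    Matrix.det_one, mul_one]

open Matrix in
lemma signNonreversal {n : ℕ} {A : Matrix (Fin n) (Fin n) ℝ} (hA : IsPMatrix A)
    {x : Fin n → ℝ} (hx : x ≠ 0) : ∃ i, 0 < x i * A.mulVec x i := by
  classical
  by_contra hcon
  push_neg at hcon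
  set S : Finset (Fin n) := Finset.univ.filter (fun i => x i ≠ 0) with hSdef
  have hSne : S.Nonempty := by
    obtain ⟨j, hj⟩ := Function.ne_iff.mp hx
    have hj' : x j ≠ 0 := by simpa using hj
    exact ⟨j, by simp [hSdef, hj']⟩
  set d : Fin n → ℝ := fun i => if x i ≠ 0 then -(A.mulVec x i) / x i else 1 with hddef
  have hd : ∀ i, 0 ≤ d i := by
    intro i
    by_cases h : x i ≠ 0
    · have heq : d i = -(x i * A.mulVec x i) / (x i * x i) := by
        simp only [hddef, if_pos h]
        rw [neg_div, neg_div, mul_div_mul_left _ _ h]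
      rw [heq]
      exact div_nonneg (neg_nonneg.2 (hcon i)) (mul_self_nonneg _)
    · have hxi : x i = 0 := not_not.mp h
      simp [hddef, hxi]
  set R : Fin n → Fin n → ℝ := fun i j => A i j with hRdef
  set E : Fin n → Fin n → ℝ := fun i => Pi.single i 1 with hEdef
  set De : Fin n → Fin n → ℝ := fun i => d i • E i with hDedef
  set M : Matrix (Fin n) (Fin n) ℝ := S.piecewise (R + De) De with hMdef
  -- M kills x
  have hMx : M.mulVec x = 0 := by
    funext i
    show M i ⬝ᵥ x = 0
    by_cases h : i ∈ S
    · have hxi : x i ≠ 0 := by simpa [hSdef] using h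
      have hrow : M i = A i + d i • E i := by
        show S.piecewise (R + De) De i = _
        rw [Finset.piecewise_eq_of_mem _ _ _ h]
        rfl
      rw [hrow, add_dotProduct, smul_dotProduct, hEdef,
        single_dotProduct, one_mul]
      have hAx : A i ⬝ᵥ x = A.mulVec x i := rfl
      rw [hAx, smul_eq_mul, hddef]
      simp only [if_pos hxi]
      rw [div_mul_cancel₀ _ hxi]
      ring
    · have hxi : x i = 0 := by simpa [hSdef] using h
      have hrow : M i = d i • E i := by
        show S.piecewise (R + De) De i = _
        rw [Finset.piecewise_eq_of_notMem _ _ _ h]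
      rw [hrow, smul_dotProduct, hEdef, single_dotProduct, one_mul,
        smul_eq_mul, hxi, mul_zero]
  -- expansion of det M
  have hexp : M.det = ∑ T ∈ S.powerset,
      (∏ i ∈ Tᶜ, d i) * (A.submatrix (fun i : T => (i : Fin n)) (fun j : T => (j : Fin n))).det := by
    have h1 : M.det = ∑ T ∈ S.powerset,
        Matrix.detRowAlternating.toMultilinearMap (T.piecewise R De) :=
      Matrix.detRowAlternating.toMultilinearMap.map_piecewise_add R De S
    rw [h1]
    refine Finset.sum_congr rfl fun T _ => ?_
    have h2 : T.piecewise R De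
        = Tᶜ.piecewise (fun i => d i • (T.piecewise R E) i) (T.piecewise R E) := by
      funext i
      by_cases h : i ∈ T
      · rw [Finset.piecewise_eq_of_mem _ _ _ h,
          Finset.piecewise_eq_of_notMem _ _ _ (by simpa using h),
          Finset.piecewise_eq_of_mem _ _ _ h]
      · rw [Finset.piecewise_eq_of_notMem _ _ _ h,
          Finset.piecewise_eq_of_mem _ _ _ (by simpa using h), hDedef,
          Finset.piecewise_eq_of_notMem _ _ _ h]
    rw [h2, Matrix.detRowAlternating.toMultilinearMap.map_piecewise_smul d _ Tᶜ, smul_eq_mul]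
    congr 1
    exact det_unitOff A T
  -- each term nonneg, and the T = S term positive
  have hterm : ∀ T ∈ S.powerset, 0 ≤
      (∏ i ∈ Tᶜ, d i) * (A.submatrix (fun i : T => (i : Fin n)) (fun j : T => (j : Fin n))).det := by
    intro T _
    refine mul_nonneg (Finset.prod_nonneg fun i _ => hd i) ?_
    rcases T.eq_empty_or_nonempty with rfl | hT
    · haveI : IsEmpty ((∅ : Finset (Fin n)) : Type) := by
        simp [Finset.isEmpty_coe_sort]; exact ⟨fun x => x.2⟩
      rw [Matrix.det_isEmpty]
      exact zero_le_one
    · exact le_of_lt (hA T hT)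
  have hpos : 0 < M.det := by
    rw [hexp]
    have hSmem : S ∈ S.powerset := Finset.mem_powerset_self S
    have hSterm : 0 < (∏ i ∈ Sᶜ, d i) *
        (A.submatrix (fun i : S => (i : Fin n)) (fun j : S => (j : Fin n))).det := by
      refine mul_pos ?_ (hA S hSne)
      refine Finset.prod_pos fun i hi => ?_
      have hxi : x i = 0 := by
        by_contra hne
        exact (Finset.mem_compl.mp hi) (by simp [hSdef, hne])
      simp [hddef, hxi]
    calc (0:ℝ) < _ := hSterm
    _ ≤ _ := Finset.single_le_sum hterm hSmem
  have : x = 0 := Matrix.eq_zero_of_mulVec_eq_zero (ne_of_gt hpos) hMx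
  exact hx this

set_option maxHeartbeats 1000000 in
open Matrix in
lemma exists_pos_mulVec_pos {n : ℕ} {Q : Matrix (Fin n) (Fin n) ℝ}
    (hQ : IsPMatrix Q) (hZ : ∀ i j, i ≠ j → Q i j ≤ 0) :
    ∃ d : Fin n → ℝ, (∀ i, 0 < d i) ∧ ∀ i, 0 < Q.mulVec d i := by
  classical
  have hdet : Q.det ≠ 0 := by
    intro h0
    obtain ⟨v, hv, hQv⟩ := (Matrix.exists_mulVec_eq_zero_iff).mpr h0
    obtain ⟨i, hi⟩ := signNonreversal hQ hv
    rw [hQv] at hi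
    simp at hi
  set d : Fin n → ℝ := Q⁻¹.mulVec 1 with hddef
  have hQd : Q.mulVec d = 1 := by
    rw [hddef, Matrix.mulVec_mulVec, Matrix.mul_nonsing_inv _ (isUnit_iff_ne_zero.mpr hdet),
      Matrix.one_mulVec]
  have hQd1 : ∀ i, Q.mulVec d i = 1 := fun i => by rw [hQd]; rfl
  -- d is nonnegative
  have hd0 : ∀ i, 0 ≤ d i := by
    by_contra hneg
    push_neg at hneg
    obtain ⟨j, hj⟩ := hneg
    set x : Fin n → ℝ := fun i => min (d i) 0 with hxdef
    have hxj : x j < 0 := by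
      show min (d j) 0 < 0
      rw [min_eq_left hj.le]; exact hj
    have hxne : x ≠ 0 := by
      intro h0
      rw [h0] at hxj
      exact lt_irrefl 0 hxj
    obtain ⟨i, hi⟩ := signNonreversal hQ hxne
    have hcontra : x i * Q.mulVec x i ≤ 0 := by
      by_cases hdi : 0 ≤ d i
      · have hxi : x i = 0 := by show min (d i) 0 = 0; exact min_eq_right hdi
        rw [hxi, zero_mul]
      · push_neg at hdi
        have hxi : x i = d i := by show min (d i) 0 = d i; exact min_eq_left hdi.le
        set y : Fin n → ℝ := fun ℓ => d ℓ - x ℓ with hydef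
        have hy0 : ∀ ℓ, 0 ≤ y ℓ := by
          intro ℓ
          have h1 : x ℓ ≤ d ℓ := min_le_left _ _
          show 0 ≤ d ℓ - x ℓ
          linarith
        have hyi : y i = 0 := by show d i - x i = 0; rw [hxi]; ring
        have hQx : Q.mulVec x i = 1 - Q.mulVec y i := by
          have h2 : y = d - x := rfl
          have h3 : Q.mulVec y i = Q.mulVec d i - Q.mulVec x i := by
            rw [h2, Matrix.mulVec_sub]
            simp
          rw [h3, hQd1]; ring
        have hQy : Q.mulVec y i ≤ 0 := by
          rw [Matrix.mulVec, dotProduct]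
          apply Finset.sum_nonpos
          intro ℓ _
          by_cases hℓ : ℓ = i
          · rw [hℓ, hyi, mul_zero]
          · exact mul_nonpos_of_nonpos_of_nonneg (hZ i ℓ (Ne.symm hℓ)) (hy0 ℓ)
        have hQxpos : 0 < Q.mulVec x i := by rw [hQx]; linarith
        have hxineg : x i < 0 := by rw [hxi]; exact hdi
        exact le_of_lt (mul_neg_of_neg_of_pos hxineg hQxpos)
    linarith
  -- d is strictly positive
  have hdpos : ∀ i, 0 < d i := by
    intro i
    rcases lt_or_eq_of_le (hd0 i) with h | h
    · exact h
    · exfalso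
      have h1 : Q.mulVec d i = 1 := hQd1 i
      have h2 : Q.mulVec d i ≤ 0 := by
        rw [Matrix.mulVec, dotProduct]
        apply Finset.sum_nonpos
        intro ℓ _
        by_cases hℓ : ℓ = i
        · rw [hℓ, ← h, mul_zero]
        · exact mul_nonpos_of_nonpos_of_nonneg (hZ i ℓ (Ne.symm hℓ)) (hd0 ℓ)
      linarith
  exact ⟨d, hdpos, fun i => by rw [hQd1 i]; norm_num⟩

lemma Fmap_closed (M : ℕ) (W σ2 : ℝ) (hσ2 : 0 < σ2) (α lam : Fin M → ℝ)
    (a : Fin M → Fin M → ℝ) (p : Fin M → ℝ) (i : Fin M)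
    (h1 : 0 ≤ ∑ ℓ ∈ Finset.univ.erase i, a i ℓ * p ℓ)
    (h2 : 0 ≤ a i i * p i) :
    Fmap M W σ2 α lam a p i = lam i - α i * W * a i i / (σ2 + ∑ ℓ, a i ℓ * p ℓ) := by
  set s := ∑ ℓ ∈ Finset.univ.erase i, a i ℓ * p ℓ with hsdef
  have hs : 0 < s + σ2 := by linarith
  have hfull : ∑ ℓ, a i ℓ * p ℓ = s + a i i * p i := by
    rw [hsdef, Finset.sum_erase_add _ _ (Finset.mem_univ i)]
  have hB : s + σ2 + a i i * p i ≠ 0 := by positivity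
  unfold Fmap gain
  rw [hfull]
  have hg : 1 + a i i / (s + σ2) * p i = (s + σ2 + a i i * p i) / (s + σ2) := by
    field_simp
  rw [hg]
  congr 1
  rw [← hsdef]
  field_simp
  ring

/-- **Theorem 1, main assertion.** If the matrix `Q` is a P-matrix,
then `F` is a uniformly P-function on `P`: there is `C > 0` such that for all
`p, p' ∈ P`, `max_{1≤i≤M} (p_i − p'_i)·(F_i(p) − F_i(p')) ≥ C·∑_i (p_i − p'_i)²`. -/
theorem Fmap_uniformlyPFunction_of_isPMatrix (M : ℕ) (hM : 1 ≤ M) (W σ2 : ℝ)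
    (hW : 0 < W) (hσ2 : 0 < σ2) (α lam pmax : Fin M → ℝ)
    (a : Fin M → Fin M → ℝ)
    (hα : ∀ i, 0 < α i) (hlam : ∀ i, 0 ≤ lam i) (hpmax : ∀ i, 0 < pmax i)
    (ha : ∀ i ℓ, 0 ≤ a i ℓ) (haii : ∀ i, 0 < a i i)
    (hQ : IsPMatrix (Qmat M W σ2 α pmax a)) :
    ∃ C > (0 : ℝ), ∀ p ∈ stratBox M pmax, ∀ p' ∈ stratBox M pmax,
      Finset.univ.sup' (Finset.univ_nonempty_iff.mpr ⟨⟨0, hM⟩⟩)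
          (fun i => (p i - p' i) * (Fmap M W σ2 α lam a p i - Fmap M W σ2 α lam a p' i))
        ≥ C * ∑ i, (p i - p' i) ^ 2 := by
  classical
  have hne : (Finset.univ : Finset (Fin M)).Nonempty := Finset.univ_nonempty_iff.mpr ⟨⟨0, hM⟩⟩
  -- Qmat is a Z-matrix
  have hZ : ∀ i j, i ≠ j → Qmat M W σ2 α pmax a i j ≤ 0 := by
    intro i j hij
    unfold Qmat
    rw [if_neg hij, neg_nonpos]
    have hs : 0 ≤ σ2⁻¹ * ∑ k, a j k * pmax k :=
      mul_nonneg (inv_nonneg.mpr hσ2.le)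
        (Finset.sum_nonneg fun k _ => mul_nonneg (ha j k) (hpmax k).le)
    have h1 : (0:ℝ) ≤ 1 + σ2⁻¹ * ∑ k, a j k * pmax k := by linarith
    exact mul_nonneg (mul_nonneg (mul_nonneg (hα i).le hW.le)
      (div_nonneg (ha i j) (haii j).le)) h1
  obtain ⟨d, hd, hQd⟩ := exists_pos_mulVec_pos hQ hZ
  -- the scaled positive vector e
  set Dmx : Fin M → ℝ := fun i => σ2 + ∑ k, a i k * pmax k with hDmxdef
  have hSnn : ∀ i, 0 ≤ ∑ k, a i k * pmax k := fun i =>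
    Finset.sum_nonneg fun k _ => mul_nonneg (ha i k) (hpmax k).le
  have hDmxpos : ∀ i, 0 < Dmx i := fun i => by
    have := hSnn i; show 0 < σ2 + _; linarith
  have hDmxge : ∀ i, σ2 ≤ Dmx i := fun i => by
    have := hSnn i; show σ2 ≤ σ2 + _; linarith
  set e : Fin M → ℝ := fun ℓ => d ℓ * Dmx ℓ / (a ℓ ℓ * σ2) with hedef
  have hepos : ∀ ℓ, 0 < e ℓ := fun ℓ =>
    div_pos (mul_pos (hd ℓ) (hDmxpos ℓ)) (mul_pos (haii ℓ) hσ2)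
  -- key dominance inequality
  have hkey : ∀ i, ∑ ℓ ∈ Finset.univ.erase i, a i ℓ * e ℓ < d i := by
    intro i
    have h0 := hQd i
    have hrw : (Qmat M W σ2 α pmax a).mulVec d i
        = α i * W * (d i - ∑ ℓ ∈ Finset.univ.erase i, a i ℓ * e ℓ) := by
      rw [Matrix.mulVec, dotProduct, ← Finset.add_sum_erase _ _ (Finset.mem_univ i)]
      have hdiag : Qmat M W σ2 α pmax a i i * d i = α i * W * d i := by
        unfold Qmat; rw [if_pos rfl]
      have hoff : ∀ ℓ ∈ Finset.univ.erase i,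
          Qmat M W σ2 α pmax a i ℓ * d ℓ = -(α i * W * (a i ℓ * e ℓ)) := by
        intro ℓ hℓ
        have hne' : i ≠ ℓ := fun h => (Finset.mem_erase.mp hℓ).1 h.symm
        unfold Qmat
        rw [if_neg hne']
        have haℓ : a ℓ ℓ ≠ 0 := ne_of_gt (haii ℓ)
        have hσ : σ2 ≠ 0 := ne_of_gt hσ2
        simp only [hedef, hDmxdef]
        field_simp
      rw [Finset.sum_congr rfl hoff, hdiag, Finset.sum_neg_distrib]
      simp only [mul_sub, Finset.mul_sum]
      ring
    rw [hrw] at h0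
    have hαW : 0 < α i * W := mul_pos (hα i) hW
    nlinarith [h0, hαW]
  set Be : Fin M → ℝ := fun i => a i i * e i - ∑ ℓ ∈ Finset.univ.erase i, a i ℓ * e ℓ
    with hBedef
  have hBepos : ∀ i, 0 < Be i := by
    intro i
    have h1 := hkey i
    have h2 : d i ≤ a i i * e i := by
      have heq : a i i * e i = d i * Dmx i / σ2 := by
        have haine : a i i ≠ 0 := ne_of_gt (haii i)
        have hσne : σ2 ≠ 0 := ne_of_gt hσ2
        simp only [hedef]
        field_simp
      rw [heq, le_div_iff₀ hσ2]
      nlinarith [hd i, hDmxge i]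
    show 0 < a i i * e i - _
    linarith
  -- constants
  set m : ℝ := Finset.univ.inf' hne (fun i => e i * Be i) with hmdef
  have hm : 0 < m := by
    rw [hmdef, Finset.lt_inf'_iff]
    exact fun i _ => mul_pos (hepos i) (hBepos i)
  have hmle : ∀ i, m ≤ e i * Be i := fun i => Finset.inf'_le _ (Finset.mem_univ i)
  set E : ℝ := ∑ j, e j ^ 2 with hEdef
  have hE : 0 < E := Finset.sum_pos (fun j _ => pow_pos (hepos j) 2) hne
  set cmin : Fin M → ℝ := fun i => α i * W * a i i / Dmx i ^ 2 with hcmindef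
  have hcminpos : ∀ i, 0 < cmin i := fun i =>
    div_pos (mul_pos (mul_pos (hα i) hW) (haii i)) (pow_pos (hDmxpos i) 2)
  set cinf : ℝ := Finset.univ.inf' hne cmin with hcinfdef
  have hcinf : 0 < cinf := by
    rw [hcinfdef, Finset.lt_inf'_iff]; exact fun i _ => hcminpos i
  have hcinfle : ∀ i, cinf ≤ cmin i := fun i => Finset.inf'_le _ (Finset.mem_univ i)
  refine ⟨cinf * m / E, div_pos (mul_pos hcinf hm) hE, ?_⟩
  intro p hp p' hp'
  set x : Fin M → ℝ := fun i => p i - p' i with hxdef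
  -- denominators
  set Dp : (Fin M → ℝ) → Fin M → ℝ := fun q i => σ2 + ∑ ℓ, a i ℓ * q ℓ with hDpdef
  have hDbound : ∀ q ∈ stratBox M pmax, ∀ i, 0 < Dp q i ∧ Dp q i ≤ Dmx i := by
    intro q hq i
    constructor
    · have : 0 ≤ ∑ ℓ, a i ℓ * q ℓ :=
        Finset.sum_nonneg fun ℓ _ => mul_nonneg (ha i ℓ) (hq ℓ).1
      show 0 < σ2 + _; linarith
    · show σ2 + _ ≤ σ2 + _
      have : ∑ ℓ, a i ℓ * q ℓ ≤ ∑ ℓ, a i ℓ * pmax ℓ :=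
        Finset.sum_le_sum fun ℓ _ => mul_le_mul_of_nonneg_left (hq ℓ).2 (ha i ℓ)
      linarith
  -- closed form of the difference
  have hF : ∀ i, Fmap M W σ2 α lam a p i - Fmap M W σ2 α lam a p' i
      = α i * W * a i i * (∑ ℓ, a i ℓ * x ℓ) / (Dp p i * Dp p' i) := by
    intro i
    have hc1 := Fmap_closed M W σ2 hσ2 α lam a p i
      (Finset.sum_nonneg fun ℓ _ => mul_nonneg (ha i ℓ) (hp ℓ).1)
      (mul_nonneg (haii i).le (hp i).1)
    have hc2 := Fmap_closed M W σ2 hσ2 α lam a p' i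
      (Finset.sum_nonneg fun ℓ _ => mul_nonneg (ha i ℓ) (hp' ℓ).1)
      (mul_nonneg (haii i).le (hp' i).1)
    rw [hc1, hc2]
    have hd1 : Dp p i = σ2 + ∑ ℓ, a i ℓ * p ℓ := rfl
    have hd2 : Dp p' i = σ2 + ∑ ℓ, a i ℓ * p' ℓ := rfl
    have hsub : Dp p i - Dp p' i = ∑ ℓ, a i ℓ * x ℓ := by
      have h3 : ∑ ℓ, a i ℓ * x ℓ = ∑ ℓ, (a i ℓ * p ℓ - a i ℓ * p' ℓ) :=
        Finset.sum_congr rfl fun ℓ _ => by show a i ℓ * (p ℓ - p' ℓ) = _; ring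
      rw [hd1, hd2, h3, Finset.sum_sub_distrib]
      ring
    have h1 := (hDbound p hp i).1
    have h2 := (hDbound p' hp' i).1
    rw [← hd1, ← hd2, ← hsub]
    field_simp
    ring
  -- trivial case
  by_cases hx0 : ∀ j, x j = 0
  · have hz : ∑ i, (p i - p' i) ^ 2 = 0 := by
      apply Finset.sum_eq_zero
      intro i _
      have : p i - p' i = 0 := hx0 i
      rw [this]; ring
    rw [hz, mul_zero, ge_iff_le]
    have h00 : (p ⟨0, hM⟩ - p' ⟨0, hM⟩) * (Fmap M W σ2 α lam a p ⟨0, hM⟩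
        - Fmap M W σ2 α lam a p' ⟨0, hM⟩) = 0 := by
      have : p ⟨0, hM⟩ - p' ⟨0, hM⟩ = 0 := hx0 ⟨0, hM⟩
      rw [this, zero_mul]
    calc (0:ℝ) = _ := h00.symm
      _ ≤ _ := Finset.le_sup'
          (fun k => (p k - p' k) * (Fmap M W σ2 α lam a p k - Fmap M W σ2 α lam a p' k))
          (Finset.mem_univ (⟨0, hM⟩ : Fin M))
  · push_neg at hx0
    obtain ⟨j, hj⟩ := hx0
    obtain ⟨i, _, hmax⟩ := Finset.exists_max_image Finset.univ (fun k => |x k| / e k) hne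
    set t : ℝ := |x i| / e i with htdef
    have ht : 0 < t := by
      have h1 : 0 < |x j| / e j := div_pos (abs_pos.mpr hj) (hepos j)
      exact lt_of_lt_of_le h1 (hmax j (Finset.mem_univ j))
    have hle : ∀ k, |x k| ≤ t * e k := fun k => by
      have := hmax k (Finset.mem_univ k)
      rwa [div_le_iff₀ (hepos k)] at this
    have hxi_abs : |x i| = t * e i := by
      rw [htdef, div_mul_cancel₀ _ (ne_of_gt (hepos i))]
    -- the quadratic form bound
    have hsbound : t ^ 2 * m ≤ x i * ∑ ℓ, a i ℓ * x ℓ := by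
      have hsplit : ∑ ℓ, a i ℓ * x ℓ
          = a i i * x i + ∑ ℓ ∈ Finset.univ.erase i, a i ℓ * x ℓ :=
        (Finset.add_sum_erase _ _ (Finset.mem_univ i)).symm
      have habs : |∑ ℓ ∈ Finset.univ.erase i, a i ℓ * x ℓ|
          ≤ t * ∑ ℓ ∈ Finset.univ.erase i, a i ℓ * e ℓ := by
        calc |∑ ℓ ∈ Finset.univ.erase i, a i ℓ * x ℓ|
            ≤ ∑ ℓ ∈ Finset.univ.erase i, |a i ℓ * x ℓ| := Finset.abs_sum_le_sum_abs _ _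
          _ ≤ ∑ ℓ ∈ Finset.univ.erase i, a i ℓ * (t * e ℓ) := by
              apply Finset.sum_le_sum
              intro ℓ _
              rw [abs_mul, abs_of_nonneg (ha i ℓ)]
              exact mul_le_mul_of_nonneg_left (hle ℓ) (ha i ℓ)
          _ = t * ∑ ℓ ∈ Finset.univ.erase i, a i ℓ * e ℓ := by
              rw [Finset.mul_sum]; exact Finset.sum_congr rfl fun ℓ _ => by ring
      have hcross : -(|x i| * (t * ∑ ℓ ∈ Finset.univ.erase i, a i ℓ * e ℓ))
          ≤ x i * ∑ ℓ ∈ Finset.univ.erase i, a i ℓ * x ℓ := by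
        have h1 : -(|x i| * |∑ ℓ ∈ Finset.univ.erase i, a i ℓ * x ℓ|)
            ≤ x i * ∑ ℓ ∈ Finset.univ.erase i, a i ℓ * x ℓ := by
          rw [← abs_mul]
          exact neg_abs_le _
        have h2 : |x i| * |∑ ℓ ∈ Finset.univ.erase i, a i ℓ * x ℓ|
            ≤ |x i| * (t * ∑ ℓ ∈ Finset.univ.erase i, a i ℓ * e ℓ) :=
          mul_le_mul_of_nonneg_left habs (abs_nonneg _)
        linarith
    -- x i * sum ≥ aii xi^2 - |xi| * t * sum_e ≥ t^2 e_i Be_i ≥ t^2 m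
      have hsq : x i * (a i i * x i) = a i i * |x i| ^ 2 := by
        rw [sq_abs]; ring
      have hstep : t ^ 2 * (e i * Be i) ≤ x i * ∑ ℓ, a i ℓ * x ℓ := by
        rw [hsplit, mul_add, hBedef]
        have e1 : x i * (a i i * x i) = a i i * (t * e i) ^ 2 := by
          rw [hsq, hxi_abs]
        rw [e1]
        have e2 : t ^ 2 * (e i * (a i i * e i - ∑ ℓ ∈ Finset.univ.erase i, a i ℓ * e ℓ))
            = a i i * (t * e i) ^ 2
              - |x i| * (t * ∑ ℓ ∈ Finset.univ.erase i, a i ℓ * e ℓ) := by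
          rw [hxi_abs]; ring
        rw [e2] at *
        linarith [hcross]
      calc t ^ 2 * m ≤ t ^ 2 * (e i * Be i) :=
            mul_le_mul_of_nonneg_left (hmle i) (by positivity)
        _ ≤ _ := hstep
    -- value at the max index
    have hval : cinf * (t ^ 2 * m)
        ≤ x i * (Fmap M W σ2 α lam a p i - Fmap M W σ2 α lam a p' i) := by
      rw [hF i]
      have hD1 := hDbound p hp i
      have hD2 := hDbound p' hp' i
      have hcge : cmin i ≤ α i * W * a i i / (Dp p i * Dp p' i) := by
        rw [hcmindef]
        apply div_le_div_of_nonneg_left (mul_pos (mul_pos (hα i) hW) (haii i)).le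
          (mul_pos hD1.1 hD2.1)
        show Dp p i * Dp p' i ≤ Dmx i ^ 2
        nlinarith [hD1.1, hD1.2, hD2.1, hD2.2, hDmxpos i]
      have hx_eq : x i * (α i * W * a i i * (∑ ℓ, a i ℓ * x ℓ) / (Dp p i * Dp p' i))
          = (α i * W * a i i / (Dp p i * Dp p' i)) * (x i * ∑ ℓ, a i ℓ * x ℓ) := by
        ring
      rw [hx_eq]
      have hs_pos : 0 < x i * ∑ ℓ, a i ℓ * x ℓ :=
        lt_of_lt_of_le (mul_pos (pow_pos ht 2) hm) hsbound
      calc cinf * (t ^ 2 * m) ≤ cmin i * (t ^ 2 * m) :=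
            mul_le_mul_of_nonneg_right (hcinfle i) (mul_pos (pow_pos ht 2) hm).le
        _ ≤ cmin i * (x i * ∑ ℓ, a i ℓ * x ℓ) :=
            mul_le_mul_of_nonneg_left hsbound (hcminpos i).le
        _ ≤ _ := mul_le_mul_of_nonneg_right hcge hs_pos.le
    -- sum of squares bound
    have hsumsq : ∑ k, (p k - p' k) ^ 2 ≤ t ^ 2 * E := by
      rw [hEdef, Finset.mul_sum]
      apply Finset.sum_le_sum
      intro k _
      have h1 : (p k - p' k) ^ 2 = |x k| ^ 2 := by rw [sq_abs]
      rw [h1]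
      calc |x k| ^ 2 ≤ (t * e k) ^ 2 := by
            apply sq_le_sq' _ (hle k)
            have := abs_nonneg (x k)
            nlinarith [hle k, mul_pos ht (hepos k)]
        _ = t ^ 2 * e k ^ 2 := by ring
    -- conclude
    rw [ge_iff_le]
    calc cinf * m / E * ∑ k, (p k - p' k) ^ 2
        ≤ cinf * m / E * (t ^ 2 * E) := by
          apply mul_le_mul_of_nonneg_left hsumsq (div_pos (mul_pos hcinf hm) hE).le
      _ = cinf * (t ^ 2 * m) := by
          have hEne : E ≠ 0 := ne_of_gt hE
          field_simp
      _ ≤ x i * (Fmap M W σ2 α lam a p i - Fmap M W σ2 α lam a p' i) := hval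
      _ ≤ _ := Finset.le_sup'
          (fun k => (p k - p' k) * (Fmap M W σ2 α lam a p k - Fmap M W σ2 α lam a p' k))
          (Finset.mem_univ i)
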